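/- Let k be a field with algebraic closure k̄, and let m ≤ n be positive integers. Let G be a nonzero homogeneous polynomial of degree d in the C(n,m) Plücker coordinates (with coefficients in k̄) whose restriction to the Grassmannian Grass(m,n) under the Plücker embedding is not identically zero, i.e., G does not vanish identically when evaluated on the m×m minors of all m×n matrices of rank m over k̄. If K is a field extension of k contained in k̄ with more than m·d elements, then there exists an m×n matrix A with entries in K, of rank m, such that G evaluated on the m×m minors of A is nonzero; that is, there is a K-rational point of Grass(m,n) not contained in the hypersurface defined by G. -/

import Mathlib

/-!
A hypersurface of degree `d` on the Grassmannian `Grass(m,n)` (cut out, via the Plücker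
embedding, by a homogeneous polynomial `G` of degree `d` in the `C(n,m)` Plücker
coordinates which does not vanish identically on the Grassmannian) does not contain all
`K`-rational points of `Grass(m,n)`, for any extension `K/k` inside `k̄` with more than
`m·d` elements.  Points of `Grass(m,n)` are represented by `m × n` matrices of rank `m`,
whose Plücker coordinates are their `m × m` minors.
-/

open MvPolynomial

/-- The `m × m` minors of an `m × n` matrix, indexed by the `m`-element subsets of the
columns (taken in increasing order); these are the Plücker coordinates of its row span. -/
noncomputable def matrixPlueckerCoords {R : Type*} [CommRing R] {m n : ℕ}
    (A : Matrix (Fin m) (Fin n) R) (s : {s : Finset (Fin n) // s.card = m}) : R :=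
  (A.submatrix id (fun i => ((s.1.orderIsoOfFin s.2 i : s.1) : Fin n))).det

/-! ### Auxiliary lemmas -/

/-- A determinant of a matrix whose entries are homogeneous of degree 1 is homogeneous. -/
lemma det_isHomogeneous_one {R σ : Type*} [CommRing R] {m : ℕ}
    (M : Matrix (Fin m) (Fin m) (MvPolynomial σ R))
    (h : ∀ i j, (M i j).IsHomogeneous 1) : M.det.IsHomogeneous m := by
  rw [Matrix.det_apply]
  apply MvPolynomial.IsHomogeneous.sum
  intro p _
  have hp : (∏ i, M (p i) i).IsHomogeneous m := by
    have := MvPolynomial.IsHomogeneous.prod Finset.univ (fun i => M (p i) i)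
      (fun _ => 1) (fun i _ => h _ _)
    simpa using this
  rcases Int.units_eq_one_or (Equiv.Perm.sign p) with hs | hs <;> rw [hs]
  · simpa using hp
  · rw [Units.smul_def, Units.val_neg, Units.val_one, neg_smul, one_smul]
    exact hp.neg

/-- The Plücker coordinates of the generic matrix are homogeneous of degree `m`. -/
lemma pluecker_X_isHomogeneous {R : Type*} [CommRing R] {m n : ℕ}
    (s : {s : Finset (Fin n) // s.card = m}) :
    (matrixPlueckerCoords
      (Matrix.of fun i j => (X (i, j) : MvPolynomial (Fin m × Fin n) R)) s).IsHomogeneous m := by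
  apply det_isHomogeneous_one
  intro i j
  exact isHomogeneous_X _ _

/-- Plücker coordinates commute with ring homomorphisms applied entrywise. -/
lemma matrixPlueckerCoords_map {R S : Type*} [CommRing R] [CommRing S] (φ : R →+* S)
    {m n : ℕ} (A : Matrix (Fin m) (Fin n) R) (s : {s : Finset (Fin n) // s.card = m}) :
    matrixPlueckerCoords (A.map φ) s = φ (matrixPlueckerCoords A s) := by
  unfold matrixPlueckerCoords
  rw [RingHom.map_det]
  rfl

/-- A matrix with a nonvanishing maximal minor has full row rank. -/
lemma rank_eq_of_det_submatrix_ne_zero {K : Type*} [Field K] {m n : ℕ}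
    (A : Matrix (Fin m) (Fin n) K) (f : Fin m → Fin n)
    (h : (A.submatrix id f).det ≠ 0) : A.rank = m := by
  classical
  refine le_antisymm A.rank_le_height ?_
  have h1 : (A.submatrix id f).rank = m := by
    rw [Matrix.rank_of_isUnit _ ((Matrix.isUnit_iff_isUnit_det _).2 (isUnit_iff_ne_zero.2 h)),
      Fintype.card_fin]
  have h2 : A.submatrix id f
      = A * Matrix.of (fun (c : Fin n) (j : Fin m) => if f j = c then (1 : K) else 0) := by
    ext i j
    simp [Matrix.mul_apply, Finset.sum_ite_eq]
  calc m = (A.submatrix id f).rank := h1.symm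
    _ ≤ A.rank := by rw [h2]; exact Matrix.rank_mul_le_left _ _

/-- Composing `G` with the generic Plücker coordinates and evaluating at a matrix is the
same as evaluating `G` at the Plücker coordinates of the matrix. -/
lemma eval_aeval_pluecker {R : Type*} [CommRing R] {m n : ℕ}
    (G : MvPolynomial {s : Finset (Fin n) // s.card = m} R)
    (A : Matrix (Fin m) (Fin n) R) :
    eval (fun p : Fin m × Fin n => A p.1 p.2)
      (aeval (fun s => matrixPlueckerCoords (Matrix.of fun i j => X (i, j)) s) G)
      = eval (matrixPlueckerCoords A) G := by
  set x : Fin m × Fin n → R := fun p => A p.1 p.2 with hx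
  rw [aeval_def, MvPolynomial.algebraMap_eq, eval_eval₂]
  have hC : (eval x).comp (C : R →+* MvPolynomial (Fin m × Fin n) R) = RingHom.id R := by
    ext r; simp
  rw [hC, eval₂_id]
  have hfun : (fun s => eval x (matrixPlueckerCoords (Matrix.of fun i j => X (i, j)) s))
      = matrixPlueckerCoords A := by
    funext s
    unfold matrixPlueckerCoords
    rw [RingHom.map_det]
    congr 1
    ext i j
    simp [hx]
  rw [hfun]

section MapCoeffs
variable {σ K L : Type*} [Field K] [Field L] [Algebra K L]

/-- Apply a `K`-linear functional to all coefficients of a polynomial over `L`. -/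
noncomputable def mapCoeffs (f : L →ₗ[K] K) (F : MvPolynomial σ L) : MvPolynomial σ K :=
  AddMonoidAlgebra.ofCoeff (Finsupp.mapRange f (map_zero f) (AddMonoidAlgebra.coeff F))

lemma coeff_mapCoeffs (f : L →ₗ[K] K) (F : MvPolynomial σ L) (s : σ →₀ ℕ) :
    coeff s (mapCoeffs f F) = f (coeff s F) :=
  Finsupp.mapRange_apply (hf := map_zero f)

lemma support_mapCoeffs (f : L →ₗ[K] K) (F : MvPolynomial σ L) :
    (mapCoeffs f F).support ⊆ F.support :=
  Finsupp.support_mapRange (hf := map_zero f)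

lemma eval_mapCoeffs (f : L →ₗ[K] K) (F : MvPolynomial σ L) (a : σ → K) :
    eval a (mapCoeffs f F) = f (eval (fun i => algebraMap K L (a i)) F) := by
  rw [eval_eq, eval_eq, map_sum]
  rw [Finset.sum_subset (support_mapCoeffs f F)]
  · apply Finset.sum_congr rfl
    intro s _
    rw [coeff_mapCoeffs]
    have hprod : (∏ i ∈ s.support, algebraMap K L (a i) ^ s i)
        = algebraMap K L (∏ i ∈ s.support, a i ^ s i) := by
      rw [map_prod]
      simp [map_pow]
    rw [hprod, mul_comm (coeff s F), ← Algebra.smul_def, map_smul, smul_eq_mul, mul_comm]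
  · intro s _ hs
    rw [MvPolynomial.notMem_support_iff, coeff_mapCoeffs] at hs
    rw [coeff_mapCoeffs, hs, zero_mul]

end MapCoeffs

/-- The evaluation of a homogeneous polynomial of degree 0 does not depend on the point. -/
lemma eval_congr_of_isHomogeneous_zero {R σ : Type*} [CommSemiring R]
    (G : MvPolynomial σ R) (h : G.IsHomogeneous 0) (x y : σ → R) :
    eval x G = eval y G := by
  rw [eval_eq, eval_eq]
  apply Finset.sum_congr rfl
  intro ds hds
  have h0 : ds = 0 := by
    by_contra hne
    exact (MvPolynomial.mem_support_iff.mp hds)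
      (h.coeff_eq_zero (by rwa [Ne, Finsupp.degree_eq_zero_iff]))
  subst h0
  simp

theorem exists_grassmannian_point_avoiding_hypersurface
    (k : Type*) [Field k] (m n : ℕ) (hm : 0 < m) (hmn : m ≤ n) (d : ℕ)
    (G : MvPolynomial {s : Finset (Fin n) // s.card = m} (AlgebraicClosure k))
    (hG : G ≠ 0) (hGhom : G.IsHomogeneous d)
    -- `G` does not vanish identically on the Grassmannian:
    (hGgr : ∃ B : Matrix (Fin m) (Fin n) (AlgebraicClosure k),
      B.rank = m ∧ MvPolynomial.eval (matrixPlueckerCoords B) G ≠ 0)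
    (K : IntermediateField k (AlgebraicClosure k))
    (hK : ((m * d : ℕ) : Cardinal) < Cardinal.mk K) :
    ∃ A : Matrix (Fin m) (Fin n) K, A.rank = m ∧
      MvPolynomial.eval
        (matrixPlueckerCoords (A.map ((↑) : K → AlgebraicClosure k))) G ≠ 0 := by
  classical
  set L := AlgebraicClosure k with hLdef
  obtain ⟨B, hBrank, hBG⟩ := hGgr
  by_cases hd : d = 0
  · -- degree 0: `G` is constant, any rank-`m` matrix over `K` works
    subst hd
    refine ⟨Matrix.of fun i j => if j = Fin.castLE hmn i then (1 : K) else 0, ?_, ?_⟩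
    · apply rank_eq_of_det_submatrix_ne_zero _ (Fin.castLE hmn)
      have hid : (Matrix.of fun i j =>
          if j = Fin.castLE hmn i then (1 : K) else 0).submatrix id (Fin.castLE hmn)
          = (1 : Matrix (Fin m) (Fin m) K) := by
        ext i j
        simp [Matrix.one_apply, Fin.castLE_inj, eq_comm]
      rw [hid, Matrix.det_one]
      exact one_ne_zero
    · rw [eval_congr_of_isHomogeneous_zero G hGhom _ (matrixPlueckerCoords B)]
      exact hBG
  · -- degree ≥ 1
    set F : MvPolynomial (Fin m × Fin n) L :=
      aeval (fun s => matrixPlueckerCoords (Matrix.of fun i j => X (i, j)) s) G with hFdef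
    have hFhom : F.IsHomogeneous (m * d) :=
      hGhom.aeval _ (fun s => pluecker_X_isHomogeneous s)
    have hFeval : ∀ A : Matrix (Fin m) (Fin n) L,
        eval (fun p : Fin m × Fin n => A p.1 p.2) F = eval (matrixPlueckerCoords A) G :=
      fun A => eval_aeval_pluecker G A
    have hF0 : F ≠ 0 := by
      intro h
      apply hBG
      rw [← hFeval B, h, map_zero]
    -- find a `K`-rational point where `F` does not vanish
    obtain ⟨s₀, hs₀⟩ : ∃ s₀, coeff s₀ F ≠ 0 := exists_coeff_ne_zero hF0
    obtain ⟨lam, hlam⟩ : ∃ lam : Module.Dual K L, lam (coeff s₀ F) ≠ 0 := by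
      by_contra hl
      push_neg at hl
      exact hs₀ ((Module.forall_dual_apply_eq_zero_iff (↥K) _).mp hl)
    set Fl : MvPolynomial (Fin m × Fin n) K := mapCoeffs lam F with hFl
    have hFlhom : Fl.IsHomogeneous (m * d) := by
      intro ds hds
      refine hFhom ?_
      rw [hFl, coeff_mapCoeffs] at hds
      exact fun hz => hds (by rw [hz, map_zero])
    have hFl0 : Fl ≠ 0 := by
      intro h
      apply hlam
      rw [← coeff_mapCoeffs lam F s₀, ← hFl, h, coeff_zero]
    obtain ⟨r, hr⟩ : ∃ r : Fin m × Fin n → K, eval r Fl ≠ 0 := by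
      by_contra hre
      push_neg at hre
      exact hFl0 (hFlhom.eq_zero_of_forall_eval_eq_zero_of_le_card hre hK.le)
    have hrF : eval (fun p : Fin m × Fin n => ((r p : K) : L)) F ≠ 0 := by
      intro h0
      apply hr
      rw [hFl, eval_mapCoeffs]
      rw [show (fun i : Fin m × Fin n => algebraMap (↥K) L (r i))
        = (fun p : Fin m × Fin n => ((r p : K) : L)) from rfl, h0, map_zero]
    -- the matrix corresponding to this point
    set A : Matrix (Fin m) (Fin n) K := Matrix.of fun i j => r (i, j) with hA
    have hmap : (fun p : Fin m × Fin n => (A.map ((↑) : K → L)) p.1 p.2)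
        = fun p : Fin m × Fin n => ((r p : K) : L) := by
      funext p
      simp [hA, Matrix.map_apply]
    have hEval : eval (matrixPlueckerCoords (A.map ((↑) : K → L))) G ≠ 0 := by
      rw [← hFeval (A.map _), hmap]
      exact hrF
    refine ⟨A, ?_, hEval⟩
    -- some Plücker coordinate of `A` is nonzero, hence `A` has rank `m`
    have hplnz : ∃ s, matrixPlueckerCoords (A.map ((↑) : K → L)) s ≠ 0 := by
      by_contra hall
      push_neg at hall
      apply hEval
      rw [funext hall, eval_eq]
      apply Finset.sum_eq_zero
      intro ds hds
      by_cases h0 : ds = 0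
      · subst h0
        rw [hGhom.coeff_eq_zero (by simpa [map_zero] using Ne.symm hd), zero_mul]
      · obtain ⟨i, hi⟩ := Finsupp.support_nonempty_iff.mpr h0
        rw [Finset.prod_eq_zero hi (by
          simp [zero_pow (Finsupp.mem_support_iff.mp hi)]), mul_zero]
    obtain ⟨s, hs⟩ := hplnz
    have hsK : matrixPlueckerCoords A s ≠ 0 := by
      intro h0
      apply hs
      rw [show (A.map ((↑) : K → L)) = A.map (algebraMap (↥K) L) from rfl,
        matrixPlueckerCoords_map, h0, map_zero]
    exact rank_eq_of_det_submatrix_ne_zero A _ hsK
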